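/- Let Δ be a simplicial complex whose facets F_1, …, F_{s+1} satisfy F_j ∩ F_{s+1} = F_j ∩ F_s = ⋯ = F_j ∩ F_{j+1} for each 1 ≤ j ≤ s. Then Δ is a quasi-forest with leaf order F_{s+1}, F_s, …, F_1, and moreover Δ is a forest: for any subset {F_{j_1}, …, F_{j_q}} of the facets with j_1 < ⋯ < j_q, the facet F_{j_1} is a leaf of ⟨F_{j_1}, …, F_{j_q}⟩ with branch F_{j_2}. -/

import Mathlib

open Polynomial Finset

/-- A (finite) simplicial complex, viewed as a downward-closed finite family of finsets. -/
def IsComplex (Δ : Finset (Finset ℕ)) : Prop :=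
  ∀ F ∈ Δ, ∀ G ⊆ F, G ∈ Δ

/-- `F` is a facet (maximal face) of `Δ`. -/
def IsFacet (Δ : Finset (Finset ℕ)) (F : Finset ℕ) : Prop :=
  F ∈ Δ ∧ ∀ G ∈ Δ, F ⊆ G → G = F

/-- `F` is a leaf of `Δ` with branch `G`: `G ≠ F` is a facet and `H ∩ F ⊆ G ∩ F`
for every facet `H ≠ F`. -/
def IsLeafWithBranch (Δ : Finset (Finset ℕ)) (F G : Finset ℕ) : Prop :=
  IsFacet Δ F ∧ IsFacet Δ G ∧ G ≠ F ∧
    ∀ H, IsFacet Δ H → H ≠ F → H ∩ F ⊆ G ∩ F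

/-- The subcomplex `⟨F₁, …, F_q⟩` generated by a finite family of faces. -/
def gen (Fs : Finset (Finset ℕ)) : Finset (Finset ℕ) :=
  Fs.biUnion Finset.powerset

/-- `fnum Δ i` is the number of faces of `Δ` of cardinality `i` (so `fnum Δ i = f_{i-1}`). -/
def fnum (Δ : Finset (Finset ℕ)) (i : ℕ) : ℕ :=
  (Δ.filter (fun A => A.card = i)).card

/-- if the facets `F_1, …, F_{s+1}` of a complex `Δ` satisfy
`F_j ∩ F_{s+1} = ⋯ = F_j ∩ F_{j+1}` for each `1 ≤ j ≤ s` (0-indexed here), then `Δ` is a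
quasi-forest with leaf order `F_{s+1}, …, F_1` (each `F_j` is a leaf of
`⟨F_{s+1}, …, F_j⟩` with branch `F_{j+1}`), and moreover `Δ` is a forest: for any subset
of the facets with smallest index `j₁` and second smallest index `j₂`, the facet `F_{j₁}`
is a leaf of the generated subcomplex with branch `F_{j₂}`. -/
theorem stmt_10 (s : ℕ) (Δ : Finset (Finset ℕ)) (F : Fin (s + 1) → Finset ℕ)
    (hcomp : IsComplex Δ) (hinj : Function.Injective F)
    (hfac : ∀ A, IsFacet Δ A ↔ ∃ j, F j = A)
    (hint : ∀ (i : Fin s) (k : Fin (s + 1)), i.castSucc < k →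
      F i.castSucc ∩ F k = F i.castSucc ∩ F i.succ) :
    (∀ j : Fin s, IsLeafWithBranch
        (gen ((Finset.univ.filter (fun i => j.castSucc ≤ i)).image F))
        (F j.castSucc) (F j.succ)) ∧
    (∀ (J : Finset (Fin (s + 1))) (j₁ j₂ : Fin (s + 1)), j₁ ∈ J → j₂ ∈ J →
      j₁ < j₂ → (∀ j ∈ J, j₁ ≤ j) → (∀ j ∈ J, j ≠ j₁ → j₂ ≤ j) →
      IsLeafWithBranch (gen (J.image F)) (F j₁) (F j₂)) := by
  have hF : ∀ j k, F j ⊆ F k → j = k := by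
    intro j k h
    have hjf := (hfac (F j)).2 ⟨j, rfl⟩
    have hkm : F k ∈ Δ := ((hfac (F k)).2 ⟨k, rfl⟩).1
    exact hinj (hjf.2 (F k) hkm h).symm
  have main : ∀ (J : Finset (Fin (s + 1))) (j₁ j₂ : Fin (s + 1)), j₁ ∈ J → j₂ ∈ J →
      j₁ < j₂ → (∀ j ∈ J, j₁ ≤ j) → (∀ j ∈ J, j ≠ j₁ → j₂ ≤ j) →
      IsLeafWithBranch (gen (J.image F)) (F j₁) (F j₂) := by
    intro J j₁ j₂ h1 h2 h12 hmin hsec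
    have hmem : ∀ G, G ∈ gen (J.image F) ↔ ∃ k ∈ J, G ⊆ F k := by
      intro G
      constructor
      · intro hG
        obtain ⟨A, hA, hGA⟩ := Finset.mem_biUnion.1 hG
        obtain ⟨k, hk, rfl⟩ := Finset.mem_image.1 hA
        exact ⟨k, hk, Finset.mem_powerset.1 hGA⟩
      · rintro ⟨k, hk, h⟩
        exact Finset.mem_biUnion.2 ⟨F k, Finset.mem_image.2 ⟨k, hk, rfl⟩,
          Finset.mem_powerset.2 h⟩
    have hfacet : ∀ j ∈ J, IsFacet (gen (J.image F)) (F j) := by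
      intro j hj
      refine ⟨(hmem _).2 ⟨j, hj, subset_rfl⟩, ?_⟩
      intro G hG hsub
      obtain ⟨k, hk, hGk⟩ := (hmem G).1 hG
      have hjk := hF j k (hsub.trans hGk)
      subst hjk
      exact subset_antisymm hGk hsub
    refine ⟨hfacet _ h1, hfacet _ h2, fun h => absurd (hinj h) h12.ne', ?_⟩
    intro H hH hne
    obtain ⟨k, hk, hHk⟩ := (hmem H).1 hH.1
    have hHeq : H = F k := (hH.2 (F k) ((hmem _).2 ⟨k, hk, subset_rfl⟩) hHk).symm
    subst hHeq
    have hkne : k ≠ j₁ := fun h => hne (by rw [h])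
    have hj2k : j₂ ≤ k := hsec k hk hkne
    have hj1k : j₁ < k := lt_of_lt_of_le h12 hj2k
    have hj1s : (j₁ : ℕ) < s := by
      have hk1 : (k : ℕ) < s + 1 := k.isLt
      have := (Fin.lt_def.1 hj1k)
      omega
    set i : Fin s := ⟨(j₁ : ℕ), hj1s⟩ with hi
    have hc : i.castSucc = j₁ := Fin.ext rfl
    have e1 := hint i k (by rw [hc]; exact hj1k)
    have e2 := hint i j₂ (by rw [hc]; exact h12)
    rw [hc] at e1 e2
    rw [Finset.inter_comm (F k), e1, ← e2, Finset.inter_comm]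
  refine ⟨?_, main⟩
  intro j
  refine main _ j.castSucc j.succ ?_ ?_ (Fin.castSucc_lt_succ (i := j)) ?_ ?_
  · simp
  · simp [Finset.mem_filter, (Fin.castSucc_lt_succ (i := j)).le]
  · intro k hk; exact (Finset.mem_filter.1 hk).2
  · intro k hk hne
    have hle : j.castSucc ≤ k := (Finset.mem_filter.1 hk).2
    exact Fin.castSucc_lt_iff_succ_le.1 (hle.lt_of_ne (Ne.symm hne))
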